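/- The q-hypergeometric weight w_x^{(α,β)} is invariant under the involution S that simultaneously replaces α by β-α+2, x by N-x, and q by q^{-1}: w_{N-x}^{(β-α+2,β)} with base q^{-1} equals w_x^{(α,β)} with base q. -/

import Mathlib

open Finset

noncomputable def qPoch (a q : ℝ) (n : ℕ) : ℝ := ∏ j ∈ Finset.range n, (1 - a * q ^ j)

noncomputable def qP (q t : ℝ) (n : ℕ) : ℝ := ∏ j ∈ Finset.range n, (q ^ (t + (j:ℝ)) - 1)

lemma negOne_mul_self (m : ℕ) : ((-1:ℝ))^(m*2) = 1 := by
  rw [pow_mul', neg_one_sq, one_pow]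

lemma two_choose_two (m : ℕ) : m.choose 2 + m.choose 2 + m = m * m := by
  induction m with
  | zero => rfl
  | succ n ih =>
    rw [Nat.choose_succ_succ, Nat.choose_one_right]
    nlinarith [ih]

lemma sum_range_id_eq_choose (n : ℕ) : ∑ j ∈ Finset.range n, j = n.choose 2 := by
  induction n with
  | zero => simp
  | succ n _ =>
    have h1 := Finset.sum_range_id_mul_two (n+1)
    have h2 := (n+1).choose_two_right
    have h3 := Finset.sum_range_id_mul_two n
    have h4 := n.choose_two_right
    omega

lemma sum_range_cast (n : ℕ) (t : ℝ) :
    ∑ j ∈ Finset.range n, (t + (j:ℝ)) = (n:ℝ) * t + (n.choose 2 : ℝ) := by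
  rw [Finset.sum_add_distrib, Finset.sum_const, Finset.card_range, nsmul_eq_mul]
  congr 1
  rw [← Nat.cast_sum, sum_range_id_eq_choose]

lemma rpow_sum_eq (q : ℝ) (hq : 0 < q) (n : ℕ) (f : ℕ → ℝ) :
    ∏ j ∈ Finset.range n, q ^ (f j) = q ^ (∑ j ∈ Finset.range n, f j) := by
  induction n with
  | zero => simp
  | succ n ih => rw [Finset.prod_range_succ, Finset.sum_range_succ, ih, Real.rpow_add hq]

lemma conv_pos (q t : ℝ) (hq : 0 < q) (n : ℕ) :
    qPoch (q ^ t) q n = (-1)^n * qP q t n := by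
  unfold qPoch qP
  calc ∏ j ∈ Finset.range n, (1 - q ^ t * q ^ j)
      = ∏ j ∈ Finset.range n, ((-1) * (q ^ (t + (j:ℝ)) - 1)) := by
        refine Finset.prod_congr rfl fun j _ => ?_
        rw [← Real.rpow_natCast q j, ← Real.rpow_add hq]; ring
    _ = (-1)^n * ∏ j ∈ Finset.range n, (q ^ (t + (j:ℝ)) - 1) := by
        rw [Finset.prod_mul_distrib, Finset.prod_const, Finset.card_range]

lemma conv_inv (q t : ℝ) (hq : 0 < q) (n : ℕ) :
    qPoch (q⁻¹ ^ t) q⁻¹ n = (q ^ ((n:ℝ) * t) * q ^ (n.choose 2))⁻¹ * qP q t n := by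
  unfold qPoch qP
  have hfac : ∀ j : ℕ, (1 - q⁻¹ ^ t * q⁻¹ ^ j) = q ^ (-(t + (j:ℝ))) * (q ^ (t + (j:ℝ)) - 1) := by
    intro j
    have h1 : q⁻¹ ^ t * q⁻¹ ^ (j:ℕ) = q ^ (-(t + (j:ℝ))) := by
      rw [← Real.rpow_natCast q⁻¹ j, ← Real.rpow_add (inv_pos.2 hq),
        Real.inv_rpow hq.le, ← Real.rpow_neg hq.le]
    rw [h1]
    have h2 : q ^ (-(t + (j:ℝ))) * q ^ (t + (j:ℝ)) = 1 := by
      rw [← Real.rpow_add hq, show -(t + (j:ℝ)) + (t + (j:ℝ)) = 0 by ring, Real.rpow_zero]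
    nlinarith [h2]
  calc ∏ j ∈ Finset.range n, (1 - q⁻¹ ^ t * q⁻¹ ^ j)
      = ∏ j ∈ Finset.range n, (q ^ (-(t + (j:ℝ))) * (q ^ (t + (j:ℝ)) - 1)) :=
        Finset.prod_congr rfl fun j _ => hfac j
    _ = (q ^ (∑ j ∈ Finset.range n, (-(t + (j:ℝ))))) *
        ∏ j ∈ Finset.range n, (q ^ (t + (j:ℝ)) - 1) := by
        rw [Finset.prod_mul_distrib, rpow_sum_eq q hq]
    _ = _ := by
        congr 1
        rw [Finset.sum_neg_distrib, sum_range_cast, ← Real.rpow_natCast q (n.choose 2),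
          ← Real.rpow_add hq, ← Real.rpow_neg hq.le]

lemma qP_rev (q s : ℝ) (hq : 0 < q) (n : ℕ) :
    qP q (1 - s - (n:ℝ)) n = (-1)^n * (q ^ ((n:ℝ) * s) * q ^ (n.choose 2))⁻¹ * qP q s n := by
  unfold qP
  have hrefl := Finset.prod_range_reflect (fun j => (q ^ ((1 - s - (n:ℝ)) + (j:ℝ)) - 1)) n
  rw [← hrefl]
  calc ∏ j ∈ Finset.range n, (q ^ ((1 - s - (n:ℝ)) + ((n - 1 - j : ℕ):ℝ)) - 1)
      = ∏ j ∈ Finset.range n, ((-1) * q ^ (-(s + (j:ℝ))) * (q ^ (s + (j:ℝ)) - 1)) := by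
        refine Finset.prod_congr rfl fun j hj => ?_
        have hj' : j < n := Finset.mem_range.1 hj
        have hc : ((n - 1 - j : ℕ):ℝ) = (n:ℝ) - 1 - (j:ℝ) := by
          have : n - 1 - j = n - (1 + j) := by omega
          rw [this, Nat.cast_sub (by omega)]
          push_cast; ring
        rw [hc, show (1 - s - (n:ℝ)) + ((n:ℝ) - 1 - (j:ℝ)) = -(s + (j:ℝ)) by ring]
        have h2 : q ^ (-(s + (j:ℝ))) * q ^ (s + (j:ℝ)) = 1 := by
          rw [← Real.rpow_add hq, show -(s + (j:ℝ)) + (s + (j:ℝ)) = 0 by ring, Real.rpow_zero]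
        nlinarith [h2]
    _ = ((-1)^n * q ^ (∑ j ∈ Finset.range n, (-(s + (j:ℝ))))) *
        ∏ j ∈ Finset.range n, (q ^ (s + (j:ℝ)) - 1) := by
        rw [Finset.prod_mul_distrib, Finset.prod_mul_distrib, Finset.prod_const, Finset.card_range, rpow_sum_eq q hq]
    _ = _ := by
        rw [mul_assoc, mul_assoc]
        congr 2
        rw [Finset.sum_neg_distrib, sum_range_cast, ← Real.rpow_natCast q (n.choose 2),
          ← Real.rpow_add hq, ← Real.rpow_neg hq.le]

lemma qP_split (q s : ℝ) (a b : ℕ) : qP q s (a+b) = qP q s a * qP q (s + (a:ℝ)) b := by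
  unfold qP
  rw [Finset.prod_range_add]
  congr 1
  refine Finset.prod_congr rfl fun j _ => ?_
  congr 1
  push_cast; ring

lemma rpow_nat_mul (q : ℝ) (hq : 0 < q) (n : ℕ) (c : ℝ) : q ^ ((n:ℝ) * c) = ((q ^ c) ^ n : ℝ) := by
  rw [← Real.rpow_natCast (q^c) n, ← Real.rpow_mul hq.le, mul_comm]

/-- The q-hypergeometric (q-Hahn) weight `w_x^{(α,β)}` with base `q`. -/
noncomputable def qHahnWeight (q α β : ℝ) (N x : ℕ) : ℝ :=
  q ^ ((1 - α) * N) * (qPoch (q ^ (α - β - 1)) q N / qPoch (q ^ (-β)) q N) *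
    q ^ ((β + 1) * x) *
    (qPoch (q ^ (-(N : ℝ))) q x * qPoch (q ^ (1 - α)) q x /
      (qPoch q q x * qPoch (q ^ (β - α - (N : ℝ) + 2)) q x))

set_option maxHeartbeats 2000000 in
/-- the weight is invariant under the involution
`S : α ↦ β - α + 2, x ↦ N - x, q ↦ q⁻¹`. -/
theorem qHahnWeight_involution (q α β : ℝ) (N x : ℕ) (hq : 0 < q) (hq1 : q ≠ 1)
    (hN : 0 < N) (hx : x ≤ N)
    (h1 : qPoch (q ^ (-β)) q N ≠ 0)
    (h2 : qPoch q q x ≠ 0)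
    (h3 : qPoch (q ^ (β - α - (N : ℝ) + 2)) q x ≠ 0)
    (h4 : qPoch (q⁻¹ ^ (-β)) q⁻¹ N ≠ 0)
    (h5 : qPoch q⁻¹ q⁻¹ (N - x) ≠ 0)
    (h6 : qPoch (q⁻¹ ^ (β - (β - α + 2) - (N : ℝ) + 2)) q⁻¹ (N - x) ≠ 0) :
    qHahnWeight q⁻¹ (β - α + 2) β N (N - x) = qHahnWeight q α β N x := by
  obtain ⟨m, rfl⟩ : ∃ m, N = x + m := ⟨N - x, (Nat.add_sub_cancel' hx).symm⟩
  simp only [Nat.add_sub_cancel_left] at h5 h6 ⊢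
  simp only [qHahnWeight]
  have qne : q ≠ 0 := hq.ne'
  have Ane : q ^ α ≠ 0 := (Real.rpow_pos_of_pos hq α).ne'
  have Bne : q ^ β ≠ 0 := (Real.rpow_pos_of_pos hq β).ne'
  -- base decompositions
  have b1 : q ^ (1 - α) = q * (q ^ α)⁻¹ := by
    rw [show (1:ℝ) - α = 1 + -α by ring, Real.rpow_add hq, Real.rpow_one, Real.rpow_neg hq.le]
  have b2 : q ^ (-β) = (q ^ β)⁻¹ := by rw [Real.rpow_neg hq.le]
  have b3 : q ^ (α - β - 1) = q ^ α * (q ^ β)⁻¹ * q⁻¹ := by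
    rw [show α - β - 1 = α + -β + -1 by ring, Real.rpow_add hq, Real.rpow_add hq,
      Real.rpow_neg hq.le, Real.rpow_neg hq.le, Real.rpow_one]
  have b4 : q ^ (-(↑(x+m):ℝ)) = ((q ^ (x+m) : ℝ))⁻¹ := by
    rw [Real.rpow_neg hq.le, Real.rpow_natCast]
  have b5 : q ^ (α - ↑x - ↑m) = q ^ α * ((q ^ (x+m) : ℝ))⁻¹ := by
    rw [show α - (x:ℝ) - (m:ℝ) = α + -(↑(x+m):ℝ) by push_cast; ring, Real.rpow_add hq, b4]
  have b6 : q ^ (β + 1) = q ^ β * q := by rw [Real.rpow_add hq, Real.rpow_one]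
  have b7 : q ^ (α - β - 1 + ↑m) = q ^ α * (q ^ β)⁻¹ * q⁻¹ * (q ^ m : ℝ) := by
    rw [Real.rpow_add hq, b3, Real.rpow_natCast]
  -- L-side prefactors
  have eL0 : q⁻¹ ^ ((1 - (β - α + 2)) * (↑(x + m):ℝ)) = ((q ^ α * (q ^ β)⁻¹ * q⁻¹) ^ (x+m))⁻¹ := by
    rw [Real.inv_rpow hq.le, show (1 - (β - α + 2)) * (↑(x + m):ℝ) = (↑(x+m):ℝ) * (α - β - 1) by ring,
      rpow_nat_mul q hq, b3]
  have eL3 : q⁻¹ ^ ((β + 1) * (↑m:ℝ)) = ((q ^ β * q) ^ m)⁻¹ := by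
    rw [Real.inv_rpow hq.le, show (β + 1) * (↑m:ℝ) = (↑m:ℝ) * (β + 1) by ring,
      rpow_nat_mul q hq, b6]
  -- L-side Pochhammer conversions
  have eL1 : qPoch (q⁻¹ ^ (β - α + 2 - β - 1)) q⁻¹ (x + m)
      = ((q * (q ^ α)⁻¹) ^ (x+m) * q ^ ((x+m).choose 2))⁻¹ * qP q (1 - α) (x+m) := by
    rw [conv_inv q _ hq, show β - α + 2 - β - 1 = 1 - α by ring, rpow_nat_mul q hq, b1]
  have eL2 : qPoch (q⁻¹ ^ (-β)) q⁻¹ (x + m)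
      = (((q ^ β)⁻¹) ^ (x+m) * q ^ ((x+m).choose 2))⁻¹ * qP q (-β) (x+m) := by
    rw [conv_inv q _ hq, rpow_nat_mul q hq, b2]
  have eL4 : qPoch (q⁻¹ ^ (-(↑(x + m):ℝ))) q⁻¹ m
      = ((((q ^ (x+m) : ℝ))⁻¹) ^ m * q ^ (m.choose 2))⁻¹ * qP q (-(↑(x+m):ℝ)) m := by
    rw [conv_inv q _ hq, rpow_nat_mul q hq, b4]
  have eL5 : qPoch (q⁻¹ ^ (1 - (β - α + 2))) q⁻¹ m
      = ((q ^ α * (q ^ β)⁻¹ * q⁻¹) ^ m * q ^ (m.choose 2))⁻¹ * qP q (α - β - 1) m := by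
    rw [conv_inv q _ hq, show 1 - (β - α + 2) = α - β - 1 by ring, rpow_nat_mul q hq, b3]
  have eL6 : qPoch q⁻¹ q⁻¹ m = ((q ^ m : ℝ) * q ^ (m.choose 2))⁻¹ * qP q 1 m := by
    have e := conv_inv q 1 hq m
    rw [Real.rpow_one] at e
    rw [e, mul_one, Real.rpow_natCast]
  have eL7 : qPoch (q⁻¹ ^ (β - (β - α + 2) - (↑(x + m):ℝ) + 2)) q⁻¹ m
      = ((q ^ α * ((q ^ (x+m) : ℝ))⁻¹) ^ m * q ^ (m.choose 2))⁻¹ * qP q (α - ↑x - ↑m) m := by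
    rw [conv_inv q _ hq, show β - (β - α + 2) - (↑(x + m):ℝ) + 2 = α - ↑x - ↑m by push_cast; ring,
      rpow_nat_mul q hq, b5]
  -- R-side prefactors
  have eR0a : q ^ ((1 - α) * (↑(x + m):ℝ)) = (q * (q ^ α)⁻¹) ^ (x+m) := by
    rw [show (1 - α) * (↑(x + m):ℝ) = (↑(x+m):ℝ) * (1 - α) by ring, rpow_nat_mul q hq, b1]
  have eR0b : q ^ ((β + 1) * (↑x:ℝ)) = (q ^ β * q) ^ x := by
    rw [show (β + 1) * (↑x:ℝ) = (↑x:ℝ) * (β + 1) by ring, rpow_nat_mul q hq, b6]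
  -- R-side Pochhammer conversions
  have eR1 : qPoch (q ^ (α - β - 1)) q (x+m) = (-1)^(x+m) * qP q (α - β - 1) (x+m) :=
    conv_pos q _ hq (x+m)
  have eR2 : qPoch (q ^ (-β)) q (x+m) = (-1)^(x+m) * qP q (-β) (x+m) := conv_pos q _ hq (x+m)
  have eR3 : qPoch (q ^ (-(↑(x + m):ℝ))) q x = (-1)^x * qP q (-(↑(x+m):ℝ)) x := conv_pos q _ hq x
  have eR4 : qPoch (q ^ (1 - α)) q x = (-1)^x * qP q (1 - α) x := conv_pos q _ hq x
  have eR5 : qPoch q q x = (-1)^x * qP q 1 x := by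
    have e := conv_pos q 1 hq x
    rw [Real.rpow_one] at e
    exact e
  have eR6 : qPoch (q ^ (β - α - (↑(x + m):ℝ) + 2)) q x
      = (-1)^x * qP q (β - α - (↑(x + m):ℝ) + 2) x := conv_pos q _ hq x
  -- splits
  have hs1 : qP q (1 - α) (x+m) = qP q (1 - α) x * qP q (1 - α + ↑x) m := qP_split q (1 - α) x m
  have hs2 : qP q (α - β - 1) (x+m) = qP q (α - β - 1) m * qP q (α - β - 1 + ↑m) x := by
    have e := qP_split q (α - β - 1) m x
    rwa [Nat.add_comm m x] at e
  -- reversals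
  have hr2 : qP q (-(↑(x+m):ℝ)) x
      = (-1)^x * (q ^ (x*(1+m)) * q ^ (x.choose 2))⁻¹ * qP q (1 + ↑m) x := by
    have e := qP_rev q (1 + (m:ℝ)) hq x
    rw [show 1 - (1 + (m:ℝ)) - (x:ℝ) = -(↑(x+m):ℝ) by push_cast; ring] at e
    rw [e, show (x:ℝ) * (1 + (m:ℝ)) = (↑(x*(1+m)):ℝ) by push_cast; ring, Real.rpow_natCast]
  have hr4 : qP q (β - α - (↑(x + m):ℝ) + 2) x
      = (-1)^x * ((q ^ α) ^ x * (((q ^ β) ^ x : ℝ))⁻¹ * ((q ^ x : ℝ))⁻¹ * q ^ (x*m) * q ^ (x.choose 2))⁻¹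
        * qP q (α - β - 1 + ↑m) x := by
    have e := qP_rev q (α - β - 1 + (m:ℝ)) hq x
    rw [show 1 - (α - β - 1 + (m:ℝ)) - (x:ℝ) = β - α - (↑(x + m):ℝ) + 2 by push_cast; ring] at e
    rw [e]
    congr 3
    rw [show (x:ℝ) * (α - β - 1 + (m:ℝ)) = (x:ℝ)*α + (x:ℝ)*(-β) + (x:ℝ)*(-1) + (x:ℝ)*(m:ℝ) by ring,
      Real.rpow_add hq, Real.rpow_add hq, Real.rpow_add hq,
      rpow_nat_mul q hq, rpow_nat_mul q hq, rpow_nat_mul q hq,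
      show (x:ℝ)*(m:ℝ) = (↑(x*m):ℝ) by push_cast; ring, Real.rpow_natCast,
      Real.rpow_neg hq.le, Real.rpow_neg hq.le, Real.rpow_one, inv_pow, inv_pow]
  have hkey2 : qP q (1 + ↑x) m * qP q 1 x = qP q 1 m * qP q (1 + ↑m) x := by
    have a := qP_split q 1 x m
    have b := qP_split q 1 m x
    rw [Nat.add_comm m x] at b
    rw [mul_comm, ← a, b]
  -- nonzero facts
  have sne : ∀ k : ℕ, ((-1:ℝ))^k ≠ 0 := fun k => pow_ne_zero k (by norm_num)
  have hc1 : qP q (-β) (x+m) ≠ 0 := by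
    rw [eR2] at h1; exact right_ne_zero_of_mul h1
  have hc2 : qP q 1 x ≠ 0 := by
    rw [eR5] at h2; exact right_ne_zero_of_mul h2
  have hc3 : qP q (α - β - 1 + ↑m) x ≠ 0 := by
    rw [eR6, hr4] at h3; exact right_ne_zero_of_mul (right_ne_zero_of_mul h3)
  have hc5 : qP q 1 m ≠ 0 := by
    rw [eL6] at h5; exact right_ne_zero_of_mul h5
  have hc6 : qP q (α - ↑x - ↑m) m ≠ 0 := by
    rw [eL7] at h6; exact right_ne_zero_of_mul h6
  have hr1 : qP q (-(↑(x+m):ℝ)) m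
      = (-1)^m * (q ^ (m*(1+x)) * q ^ (m.choose 2))⁻¹ * (qP q 1 m * qP q (1 + ↑m) x / qP q 1 x) := by
    have e := qP_rev q (1 + (x:ℝ)) hq m
    rw [show 1 - (1 + (x:ℝ)) - (m:ℝ) = -(↑(x+m):ℝ) by push_cast; ring] at e
    rw [e, show (m:ℝ) * (1 + (x:ℝ)) = (↑(m*(1+x)):ℝ) by push_cast; ring, Real.rpow_natCast]
    congr 1
    rw [eq_div_iff hc2]
    exact hkey2
  have hr3 : qP q (1 - α + ↑x) m
      = (-1)^m * ((q ^ α) ^ m)⁻¹ * q ^ (m*x) * (q ^ m : ℝ) * q ^ (m.choose 2)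
        * qP q (α - ↑x - ↑m) m := by
    have e := qP_rev q (α - (x:ℝ) - (m:ℝ)) hq m
    rw [show 1 - (α - (x:ℝ) - (m:ℝ)) - (m:ℝ) = 1 - α + ↑x by ring] at e
    rw [e]
    have hch : m.choose 2 + m.choose 2 + m = m * m := two_choose_two m
    have key : (q ^ ((m:ℝ) * (α - ↑x - ↑m)) * q ^ (m.choose 2))⁻¹
        = ((q ^ α) ^ m)⁻¹ * q ^ (m*x) * (q ^ m : ℝ) * q ^ (m.choose 2) := by
      rw [show (m:ℝ) * (α - ↑x - ↑m) = (m:ℝ)*α - (↑(m*x + m*m):ℝ) by push_cast; ring]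
      rw [show (m:ℝ)*α - (↑(m*x + m*m):ℝ) = (m:ℝ)*α + -(↑(m*x + m*m):ℝ) by ring,
        Real.rpow_add hq, rpow_nat_mul q hq, Real.rpow_neg hq.le, Real.rpow_natCast]
      rw [show m*x + m*m = m*x + m.choose 2 + m.choose 2 + m by omega]
      field_simp
      ring
    rw [key]
    ring
  rw [eL0, eL1, eL2, eL3, eL4, eL5, eL6, eL7, eR0a, eR0b, eR1, eR2, eR3, eR4, eR5, eR6,
    hs1, hs2, hr1, hr2, hr3, hr4]
  field_simp
  ring_nf
  rw [negOne_mul_self]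
  simp only [inv_pow]
  field_simp
  ring
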